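/- Let S ⊆ A be a set of alternatives, N' ⊆ N a group of voters, and z = Σ_{i∈N'} |A_i ∩ S|. Suppose a ∈ S minimizes the PAV-score decrease w_PAV(S) − w_PAV(S∖{·}) among all alternatives of S, and let z' = Σ_{i∈N'} |A_i ∩ (S∖{a})|, with z' < z. Then for every b ∈ S, w_PAV(S) − w_PAV(S∖{b}) ≥ (z−z')²/z. -/
import Mathlib


open Finset

/-- The PAV-score of a set `S` of alternatives: `∑_i ∑_{j=1}^{|A_i ∩ S|} 1/j`. -/
def pavScore {n m : ℕ} (App : Fin n → Finset (Fin m)) (S : Finset (Fin m)) : ℚ :=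
  ∑ i, ∑ j ∈ Finset.range (App i ∩ S).card, (1 : ℚ) / (j + 1)

lemma sq_card_le_sum_mul_sum_inv {ι : Type*} (s : Finset ι) (c : ι → ℚ)
    (hc : ∀ i ∈ s, 0 < c i) :
    (s.card : ℚ) ^ 2 ≤ (∑ i ∈ s, c i) * (∑ i ∈ s, 1 / c i) := by
  have h2 : (2 : ℚ) * (s.card : ℚ) ^ 2 ≤ 2 * ((∑ i ∈ s, c i) * (∑ i ∈ s, 1 / c i)) := by
    rw [Finset.sum_mul_sum]
    have hswap : ∑ i ∈ s, ∑ j ∈ s, c i * (1 / c j) = ∑ i ∈ s, ∑ j ∈ s, c j * (1 / c i) :=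
      Finset.sum_comm
    have : (2 : ℚ) * ∑ i ∈ s, ∑ j ∈ s, c i * (1 / c j)
        = ∑ i ∈ s, ∑ j ∈ s, (c i * (1 / c j) + c j * (1 / c i)) := by
      simp only [Finset.sum_add_distrib]
      rw [← hswap]; ring
    rw [this]
    have hle : ∑ i ∈ s, ∑ j ∈ s, (2 : ℚ) ≤
        ∑ i ∈ s, ∑ j ∈ s, (c i * (1 / c j) + c j * (1 / c i)) := by
      apply Finset.sum_le_sum
      intro i hi
      apply Finset.sum_le_sum
      intro j hj
      have hci := hc i hi
      have hcj := hc j hj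
      have : c i * (1 / c j) + c j * (1 / c i) = (c i * c i + c j * c j) / (c j * c i) := by
        field_simp
      rw [this, le_div_iff₀ (by positivity)]
      nlinarith [sq_nonneg (c i - c j)]
    calc (2 : ℚ) * (s.card : ℚ) ^ 2 = ∑ _i ∈ s, ∑ _j ∈ s, (2 : ℚ) := by
          simp [Finset.sum_const, mul_comm]; ring
      _ ≤ _ := hle
  linarith

lemma pav_diff_eq {n m : ℕ} (App : Fin n → Finset (Fin m)) (S : Finset (Fin m))
    (b : Fin m) (hb : b ∈ S) :
    pavScore App S - pavScore App (S.erase b) =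
      ∑ i ∈ Finset.univ.filter (fun i => b ∈ App i), (1 : ℚ) / ((App i ∩ S).card : ℚ) := by
  rw [pavScore, pavScore, ← Finset.sum_sub_distrib, Finset.sum_filter]
  apply Finset.sum_congr rfl
  intro i _
  by_cases hbi : b ∈ App i
  · have hmem : b ∈ App i ∩ S := Finset.mem_inter.mpr ⟨hbi, hb⟩
    have herase : App i ∩ S.erase b = (App i ∩ S).erase b := by
      ext x
      simp only [Finset.mem_inter, Finset.mem_erase]
      tauto
    have hcardpos : 0 < (App i ∩ S).card := Finset.card_pos.mpr ⟨b, hmem⟩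
    obtain ⟨k, hk⟩ := Nat.exists_eq_succ_of_ne_zero hcardpos.ne'
    rw [herase, Finset.card_erase_of_mem hmem, hk, if_pos hbi]
    simp only [Nat.succ_sub_one]
    rw [Finset.sum_range_succ]
    push_cast
    ring
  · have herase : App i ∩ S.erase b = App i ∩ S := by
      ext x
      simp only [Finset.mem_inter, Finset.mem_erase]
      constructor
      · rintro ⟨h1, _, h2⟩; exact ⟨h1, h2⟩
      · rintro ⟨h1, h2⟩
        exact ⟨h1, fun hx => hbi (hx ▸ h1), h2⟩
    rw [herase, if_neg hbi, sub_self]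

theorem rev_seqpav_score_decrease_lower_bound
    {n m : ℕ} (App : Fin n → Finset (Fin m)) (hApp : ∀ i, (App i).Nonempty)
    (S : Finset (Fin m)) (N' : Finset (Fin n)) (a : Fin m) (ha : a ∈ S)
    (hmin : ∀ b ∈ S, pavScore App S - pavScore App (S.erase a) ≤
      pavScore App S - pavScore App (S.erase b))
    (z z' : ℕ) (hz : z = ∑ i ∈ N', (App i ∩ S).card)
    (hz' : z' = ∑ i ∈ N', (App i ∩ S.erase a).card) (hlt : z' < z) :
    ∀ b ∈ S, ((z : ℚ) - (z' : ℚ)) ^ 2 / (z : ℚ) ≤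
      pavScore App S - pavScore App (S.erase b) := by
  intro b hb
  refine le_trans ?_ (hmin b hb)
  -- T : voters in N' approving a
  set T := N'.filter (fun i => a ∈ App i) with hT
  -- z = z' + T.card
  have hcard : z = z' + T.card := by
    rw [hz, hz', hT, Finset.card_filter, ← Finset.sum_add_distrib]
    apply Finset.sum_congr rfl
    intro i _
    by_cases hai : a ∈ App i
    · have hmem : a ∈ App i ∩ S := Finset.mem_inter.mpr ⟨hai, ha⟩
      have herase : App i ∩ S.erase a = (App i ∩ S).erase a := by
        ext x; simp only [Finset.mem_inter, Finset.mem_erase]; tauto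
      rw [herase, Finset.card_erase_of_mem hmem, if_pos hai]
      have : 0 < (App i ∩ S).card := Finset.card_pos.mpr ⟨a, hmem⟩
      omega
    · have herase : App i ∩ S.erase a = App i ∩ S := by
        ext x
        simp only [Finset.mem_inter, Finset.mem_erase]
        constructor
        · rintro ⟨h1, _, h2⟩; exact ⟨h1, h2⟩
        · rintro ⟨h1, h2⟩
          exact ⟨h1, fun hx => hai (hx ▸ h1), h2⟩
      rw [herase, if_neg hai, add_zero]
  have hTz : ((z : ℚ) - (z' : ℚ)) = (T.card : ℚ) := by
    rw [hcard]; push_cast; ring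
  rw [hTz, pav_diff_eq App S a ha]
  -- terms positive on T, T ⊆ filter
  have hTsub : T ⊆ Finset.univ.filter (fun i => a ∈ App i) := by
    intro i hi
    simp only [Finset.mem_filter, Finset.mem_univ, true_and]
    exact (Finset.mem_filter.mp hi).2
  have hcpos : ∀ i ∈ T, 0 < ((App i ∩ S).card : ℚ) := by
    intro i hi
    have hai : a ∈ App i := (Finset.mem_filter.mp hi).2
    have : 0 < (App i ∩ S).card := Finset.card_pos.mpr ⟨a, Finset.mem_inter.mpr ⟨hai, ha⟩⟩
    exact_mod_cast this
  have step1 : ∑ i ∈ T, (1 : ℚ) / ((App i ∩ S).card : ℚ) ≤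
      ∑ i ∈ Finset.univ.filter (fun i => a ∈ App i), (1 : ℚ) / ((App i ∩ S).card : ℚ) := by
    apply Finset.sum_le_sum_of_subset_of_nonneg hTsub
    intro i _ _
    positivity
  refine le_trans ?_ step1
  -- Cauchy–Schwarz / AM–HM step
  have hCS := sq_card_le_sum_mul_sum_inv T (fun i => ((App i ∩ S).card : ℚ)) hcpos
  have hsum_le : (∑ i ∈ T, ((App i ∩ S).card : ℚ)) ≤ (z : ℚ) := by
    rw [hz]
    push_cast
    apply Finset.sum_le_sum_of_subset_of_nonneg (Finset.filter_subset _ _)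
    intro i _ _
    positivity
  have hzpos : (0 : ℚ) < (z : ℚ) := by
    have : 0 < z := lt_of_le_of_lt (Nat.zero_le _) hlt
    exact_mod_cast this
  have hinv_nonneg : (0 : ℚ) ≤ ∑ i ∈ T, (1 : ℚ) / ((App i ∩ S).card : ℚ) := by
    apply Finset.sum_nonneg
    intro i hi
    positivity
  rw [div_le_iff₀ hzpos]
  calc (T.card : ℚ) ^ 2 ≤ (∑ i ∈ T, ((App i ∩ S).card : ℚ)) *
        (∑ i ∈ T, 1 / ((App i ∩ S).card : ℚ)) := hCS
    _ ≤ (z : ℚ) * (∑ i ∈ T, 1 / ((App i ∩ S).card : ℚ)) :=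
        mul_le_mul_of_nonneg_right hsum_le hinv_nonneg
    _ = (∑ i ∈ T, 1 / ((App i ∩ S).card : ℚ)) * (z : ℚ) := mul_comm _ _
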